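/- Fix θ ∈ (−π/2, π/2). If f : ℝ → ℝ is twice differentiable with f''(x) = 6·(sec θ)^{2/3} − 96·f(x)² for all x, f(0) = r₂(θ) and f'(0) = 0, then r₂(θ) ≤ f(x) ≤ r₃(θ) for all x ∈ ℝ. Likewise, if g : ℝ → ℝ is twice differentiable with g''(y) = −6·(sec θ)^{2/3} + 96·g(y)² for all y, g(0) = r₂(θ) and g'(0) = 0, then r₁(θ) ≤ g(y) ≤ r₂(θ) for all y ∈ ℝ. -/

import Mathlib

open Real

/-- `sec θ = (cos θ)⁻¹`. -/
noncomputable def sec (θ : ℝ) : ℝ := (Real.cos θ)⁻¹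

/-- `r₁(θ) = (1/2)·sin(θ/3 − 2π/3)·(sec θ)^{1/3}`. -/
noncomputable def r₁ (θ : ℝ) : ℝ :=
  (1/2) * Real.sin (θ/3 - 2*π/3) * (sec θ) ^ ((1:ℝ)/3)

/-- `r₂(θ) = (1/2)·sin(θ/3)·(sec θ)^{1/3}`. -/
noncomputable def r₂ (θ : ℝ) : ℝ :=
  (1/2) * Real.sin (θ/3) * (sec θ) ^ ((1:ℝ)/3)

/-- `r₃(θ) = (1/2)·sin(θ/3 + 2π/3)·(sec θ)^{1/3}`. -/
noncomputable def r₃ (θ : ℝ) : ℝ :=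
  (1/2) * Real.sin (θ/3 + 2*π/3) * (sec θ) ^ ((1:ℝ)/3)

lemma sec_pos {θ : ℝ} (hθ : θ ∈ Set.Ioo (-(π/2)) (π/2)) : 0 < sec θ := by
  have : 0 < Real.cos θ := Real.cos_pos_of_mem_Ioo (by exact ⟨hθ.1, hθ.2⟩)
  exact inv_pos.mpr this

lemma cubic_eq {θ : ℝ} (hθ : θ ∈ Set.Ioo (-(π/2)) (π/2)) (t : ℝ) :
    -2 * Real.tan θ + 12 * (sec θ) ^ ((2:ℝ)/3) * t - 64 * t^3
      = -64 * (t - r₁ θ) * (t - r₂ θ) * (t - r₃ θ) := by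
  have hsec := sec_pos hθ
  set c : ℝ := (sec θ) ^ ((1:ℝ)/3) with hcdef
  have hc3 : c ^ 3 = sec θ := by
    rw [hcdef, ← Real.rpow_natCast ((sec θ) ^ ((1:ℝ)/3)) 3, ← Real.rpow_mul hsec.le]
    norm_num
  have hc2 : c ^ 2 = (sec θ) ^ ((2:ℝ)/3) := by
    rw [hcdef, ← Real.rpow_natCast ((sec θ) ^ ((1:ℝ)/3)) 2, ← Real.rpow_mul hsec.le]
    norm_num
  have hcos23 : Real.cos (2*π/3) = -(1/2) := by
    rw [show (2*π/3 : ℝ) = π - π/3 by ring, Real.cos_pi_sub, Real.cos_pi_div_three]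
  have hsin23 : Real.sin (2*π/3) = Real.sqrt 3 / 2 := by
    rw [show (2*π/3 : ℝ) = π - π/3 by ring, Real.sin_pi_sub, Real.sin_pi_div_three]
  set a : ℝ := θ/3 with hadef
  have hs1 : Real.sin (a - 2*π/3) = -(1/2) * Real.sin a - (Real.sqrt 3/2) * Real.cos a := by
    rw [Real.sin_sub, hcos23, hsin23]; ring
  have hs3 : Real.sin (a + 2*π/3) = -(1/2) * Real.sin a + (Real.sqrt 3/2) * Real.cos a := by
    rw [Real.sin_add, hcos23, hsin23]; ring
  have hsq : Real.sqrt 3 ^ 2 = 3 := Real.sq_sqrt (by norm_num)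
  have hpy : Real.sin a ^ 2 + Real.cos a ^ 2 = 1 := Real.sin_sq_add_cos_sq a
  have hsinθ : Real.sin θ = 3 * Real.sin a - 4 * Real.sin a ^ 3 := by
    rw [show θ = 3 * a by rw [hadef]; ring, Real.sin_three_mul]
  have htan : Real.tan θ = Real.sin θ * sec θ := by
    rw [Real.tan_eq_sin_div_cos, sec, div_eq_mul_inv]
  rw [r₁, r₂, r₃, ← hcdef, ← hadef, hs1, hs3, htan, hsinθ, ← hc2, ← hc3]
  linear_combination (2*Real.sin a*Real.cos a^2*c^3 - 4*Real.cos a^2*c^2*t) * hsq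
    + (6*Real.sin a*c^3 - 12*c^2*t) * hpy

lemma roots_lt {θ : ℝ} (hθ : θ ∈ Set.Ioo (-(π/2)) (π/2)) : r₁ θ < r₂ θ ∧ r₂ θ < r₃ θ := by
  have hπ := Real.pi_pos
  obtain ⟨h1, h2⟩ := hθ
  have hc : (0:ℝ) < (sec θ) ^ ((1:ℝ)/3) := Real.rpow_pos_of_pos (sec_pos ⟨h1, h2⟩) _
  set a : ℝ := θ/3 with hadef
  have ha1 : -(π/6) < a := by rw [hadef]; linarith
  have ha2 : a < π/6 := by rw [hadef]; linarith
  have mono := Real.strictMonoOn_sin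
  -- sin a < 1/2
  have hs2u : Real.sin a < 1/2 := by
    rw [← Real.sin_pi_div_six]
    exact mono ⟨by linarith, by linarith⟩ ⟨by linarith, by linarith⟩ (by linarith)
  -- -1/2 < sin a
  have hs2l : -(1/2) < Real.sin a := by
    have : Real.sin (-(π/6)) < Real.sin a :=
      mono ⟨by linarith, by linarith⟩ ⟨by linarith, by linarith⟩ ha1
    rwa [Real.sin_neg, Real.sin_pi_div_six] at this
  -- sin (a + 2π/3) > 1/2
  have hs3 : 1/2 < Real.sin (a + 2*π/3) := by
    have h' : Real.sin (a + 2*π/3) = Real.sin (π/3 - a) := by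
      rw [show a + 2*π/3 = π - (π/3 - a) by ring, Real.sin_pi_sub]
    rw [h', ← Real.sin_pi_div_six]
    exact mono ⟨by linarith, by linarith⟩ ⟨by linarith, by linarith⟩ (by linarith)
  -- sin (a - 2π/3) < -1/2
  have hs1 : Real.sin (a - 2*π/3) < -(1/2) := by
    have h' : Real.sin (a - 2*π/3) = -Real.sin (π/3 + a) := by
      rw [show a - 2*π/3 = -(2*π/3 - a) by ring, Real.sin_neg,
        show 2*π/3 - a = π - (π/3 + a) by ring, Real.sin_pi_sub]
    have : Real.sin (π/6) < Real.sin (π/3 + a) :=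
      mono ⟨by linarith, by linarith⟩ ⟨by linarith, by linarith⟩ (by linarith)
    rw [Real.sin_pi_div_six] at this
    rw [h']; linarith
  constructor
  · rw [r₁, r₂, ← hadef]; nlinarith
  · rw [r₂, r₃, ← hadef]; nlinarith

/-- Trapping lemma via IVT. -/
lemma trap {a b c : ℝ} (hab : a < b) (hbc : b < c) {f : ℝ → ℝ} (hf : Continuous f)
    (h0 : f 0 = b) (hQ : ∀ x, 0 ≤ -64 * (f x - a) * (f x - b) * (f x - c)) :
    ∀ x, b ≤ f x ∧ f x ≤ c := by
  intro x
  constructor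
  · by_contra hlt
    push_neg at hlt
    -- first: f x ≤ a
    have hxa : f x ≤ a := by
      by_contra h'
      push_neg at h'
      nlinarith [hQ x, mul_pos (mul_pos (show (0:ℝ) < f x - a by linarith)
        (show (0:ℝ) < b - f x by linarith)) (show (0:ℝ) < c - f x by linarith)]
    -- IVT: some z with f z = (a+b)/2
    have hmem : (a+b)/2 ∈ Set.uIcc (f x) (f 0) := by
      rw [h0, Set.mem_uIcc]
      left; constructor <;> linarith
    obtain ⟨z, _, hz⟩ := intermediate_value_uIcc (hf.continuousOn) hmem
    have := hQ z
    rw [hz] at this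
    nlinarith [mul_pos (mul_pos (show (0:ℝ) < (a+b)/2 - a by linarith)
      (show (0:ℝ) < b - (a+b)/2 by linarith)) (show (0:ℝ) < c - (a+b)/2 by linarith)]
  · by_contra hlt
    push_neg at hlt
    nlinarith [hQ x, mul_pos (mul_pos (show (0:ℝ) < f x - a by linarith)
      (show (0:ℝ) < f x - b by linarith)) (show (0:ℝ) < f x - c by linarith)]

/-- Energy conservation for the ODE `f'' = 6k - 96 f²`. -/
lemma energy (k : ℝ) (f : ℝ → ℝ) (hf : Differentiable ℝ f) (hf' : Differentiable ℝ (deriv f))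
    (hode : ∀ x, deriv (deriv f) x = 6 * k - 96 * (f x) ^ 2) (x : ℝ) :
    (deriv f x)^2 + 64*(f x)^3 - 12*k*(f x)
      = (deriv f 0)^2 + 64*(f 0)^3 - 12*k*(f 0) := by
  set E : ℝ → ℝ := fun y => (deriv f y)^2 + 64*(f y)^3 - 12*k*(f y) with hE
  have hD : ∀ y, HasDerivAt E 0 y := by
    intro y
    have h1 : HasDerivAt f (deriv f y) y := (hf y).hasDerivAt
    have h2 : HasDerivAt (deriv f) (deriv (deriv f) y) y := (hf' y).hasDerivAt
    have hsum := (((h2.pow 2)).add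
      (((h1.pow 3)).const_mul 64)).sub ((h1.const_mul (12*k)))
    have : HasDerivAt E ((2:ℕ) * deriv f y ^ (2-1) * deriv (deriv f) y
        + 64 * ((3:ℕ) * f y ^ (3-1) * deriv f y) - 12*k * deriv f y) y := by
      have hE' : E = ((deriv f ^ 2 + fun y => 64 * (f ^ 3) y) - fun y => 12 * k * f y) := by
        funext z; simp only [hE, Pi.sub_apply, Pi.add_apply, Pi.pow_apply]
      rw [hE']; exact hsum
    convert this using 1
    rw [hode y]
    push_cast
    ring
  have hconst := is_const_of_deriv_eq_zero (fun y => (hD y).differentiableAt)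
    (fun y => (hD y).deriv) x 0
  exact hconst

/-- Solutions of the ODEs for `f` and `g` stay trapped between the roots:
`r₂(θ) ≤ f ≤ r₃(θ)` and `r₁(θ) ≤ g ≤ r₂(θ)`. -/
theorem solutions_bounded (θ : ℝ) (hθ : θ ∈ Set.Ioo (-(π/2)) (π/2)) :
    (∀ f : ℝ → ℝ, Differentiable ℝ f → Differentiable ℝ (deriv f) →
      (∀ x, deriv (deriv f) x = 6 * (sec θ) ^ ((2:ℝ)/3) - 96 * (f x) ^ 2) →
      f 0 = r₂ θ → deriv f 0 = 0 →
      ∀ x, r₂ θ ≤ f x ∧ f x ≤ r₃ θ)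
    ∧
    (∀ g : ℝ → ℝ, Differentiable ℝ g → Differentiable ℝ (deriv g) →
      (∀ y, deriv (deriv g) y = -6 * (sec θ) ^ ((2:ℝ)/3) + 96 * (g y) ^ 2) →
      g 0 = r₂ θ → deriv g 0 = 0 →
      ∀ y, r₁ θ ≤ g y ∧ g y ≤ r₂ θ) := by
  obtain ⟨hab, hbc⟩ := roots_lt hθ
  constructor
  · intro f hf hf' hode h0 h0'
    have key : ∀ x, 0 ≤ -64 * (f x - r₁ θ) * (f x - r₂ θ) * (f x - r₃ θ) := by
      intro x
      have e1 := energy ((sec θ)^((2:ℝ)/3)) f hf hf' hode x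
      have e2 := cubic_eq hθ (f x)
      have e3 := cubic_eq hθ (r₂ θ)
      rw [h0, h0'] at e1
      have hsq : (deriv f x)^2 = -64 * (f x - r₁ θ) * (f x - r₂ θ) * (f x - r₃ θ) := by
        linear_combination e1 + e2 - e3
      rw [← hsq]
      positivity
    exact trap hab hbc hf.continuous h0 key
  · intro g hg hg' hode h0 h0'
    set h : ℝ → ℝ := fun y => -(g y) with hh
    have hdh : deriv h = fun y => -(deriv g y) := by
      funext y; exact deriv.neg
    have hdiff : Differentiable ℝ h := hg.neg
    have hdiff' : Differentiable ℝ (deriv h) := by rw [hdh]; exact hg'.neg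
    have hodeh : ∀ y, deriv (deriv h) y = 6 * ((sec θ)^((2:ℝ)/3)) - 96 * (h y) ^ 2 := by
      intro y
      rw [hdh]
      have : deriv (fun y => -(deriv g y)) y = -(deriv (deriv g) y) := deriv.neg
      rw [this, hode y]
      show _ = _ - 96 * (-(g y))^2
      ring
    have h00 : h 0 = -(r₂ θ) := by show -(g 0) = _; rw [h0]
    have h00' : deriv h 0 = 0 := by rw [hdh]; show -(deriv g 0) = 0; rw [h0']; ring
    have key : ∀ y, 0 ≤ -64 * (h y - (-(r₃ θ))) * (h y - (-(r₂ θ))) * (h y - (-(r₁ θ))) := by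
      intro y
      have e1 := energy ((sec θ)^((2:ℝ)/3)) h hdiff hdiff' hodeh y
      have e2 := cubic_eq hθ (-(h y))
      have e3 := cubic_eq hθ (r₂ θ)
      rw [h00, h00'] at e1
      have hsq : (deriv h y)^2
          = -64 * (h y - (-(r₃ θ))) * (h y - (-(r₂ θ))) * (h y - (-(r₁ θ))) := by
        linear_combination e1 - e2 + e3
      rw [← hsq]
      positivity
    have := trap (by linarith : -(r₃ θ) < -(r₂ θ)) (by linarith : -(r₂ θ) < -(r₁ θ))
      hdiff.continuous h00 key
    intro y
    obtain ⟨hy1, hy2⟩ := this y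
    have hhy : h y = -(g y) := rfl
    rw [hhy] at hy1 hy2
    exact ⟨by linarith, by linarith⟩
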